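/- Let O₁ and O₂ be nonempty sets and O = O₁ × O₂, with preorders ≽₁ on Δ(O₁), ≽₂ on Δ(O₂), and a preorder ≽ on Δ(O). Suppose that for each i ∈ {1,2} there are aᵢ, bᵢ, cᵢ, dᵢ ∈ Oᵢ with δ_{aᵢ} ≻ᵢ δ_{bᵢ} ≻ᵢ δ_{cᵢ} ≻ᵢ δ_{dᵢ}, with the uniform lottery aᵢ/dᵢ ∼ᵢ δ_{bᵢ} and with δ_{cᵢ} ≽ᵢ bᵢ/dᵢ. Then ≽ cannot simultaneously satisfy Pareto, Converse Pareto, Independence, Unidimensional Dimensional Separability, and Negative Dominance. -/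

import Mathlib

open scoped BigOperators

noncomputable section

/-- A finite-support lottery on `X`. -/
structure Lottery (X : Type*) where
  val : X →₀ ℝ
  nonneg : ∀ x, 0 ≤ val x
  total : val.sum (fun _ p => p) = 1

namespace Lottery

variable {X : Type*}

/-- The point-mass lottery at `x`. -/
def delta (x : X) : Lottery X where
  val := Finsupp.single x 1
  nonneg := fun y => by
    classical
    rw [Finsupp.single_apply]
    split <;> norm_num
  total := by
    rw [Finsupp.sum_single_index rfl]

/-- The mixture `α • f + (1 - α) • g`. -/
def mix (α : ℝ) (h1 : 0 ≤ α) (h2 : α ≤ 1) (f g : Lottery X) : Lottery X where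
  val := α • f.val + (1 - α) • g.val
  nonneg := fun x => by
    have hf := f.nonneg x
    have hg := g.nonneg x
    simp only [Finsupp.coe_add, Finsupp.coe_smul, Pi.add_apply, Pi.smul_apply, smul_eq_mul]
    nlinarith
  total := by
    rw [Finsupp.sum_add_index' (fun _ => rfl) (fun _ _ _ => rfl)]
    rw [Finsupp.sum_smul_index (fun _ => rfl), Finsupp.sum_smul_index (fun _ => rfl)]
    rw [← Finsupp.mul_sum, ← Finsupp.mul_sum, f.total, g.total]
    ring

/-- The uniform lottery on `a` and `b`, written `a/b` in the paper. -/
def unif (a b : X) : Lottery X := mix (1/2) (by norm_num) (by norm_num) (delta a) (delta b)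

/-- Strict preference. -/
def SPref (R : Lottery X → Lottery X → Prop) (f g : Lottery X) : Prop := R f g ∧ ¬ R g f

/-- Indifference. -/
def Indiff (R : Lottery X → Lottery X → Prop) (f g : Lottery X) : Prop := R f g ∧ R g f

/-- Incomparability. -/
def Incomp (R : Lottery X → Lottery X → Prop) (f g : Lottery X) : Prop := ¬ R f g ∧ ¬ R g f

/-- Negative Dominance. -/
def NegDominance (R : Lottery X → Lottery X → Prop) : Prop :=
  ∀ f g : Lottery X, SPref R f g →
    ∃ o ∈ f.val.support, ∃ o' ∈ g.val.support, SPref R (delta o) (delta o')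

/-- Independence. -/
def Independence (R : Lottery X → Lottery X → Prop) : Prop :=
  ∀ f g h : Lottery X, ∀ α : ℝ, ∀ (h1 : 0 < α) (h2 : α < 1),
    (R f g ↔ R (mix α h1.le h2.le f h) (mix α h1.le h2.le g h))

/-- The coordinatewise expectation of a lottery on `ℝ²`. -/
def expLot (f : Lottery (ℝ × ℝ)) : ℝ × ℝ :=
  (f.val.sum fun o p => p * o.1, f.val.sum fun o p => p * o.2)

/-- Pareto. -/
def Pareto (R : Lottery (ℝ × ℝ) → Lottery (ℝ × ℝ) → Prop) : Prop :=
  ∀ x y x' y' : ℝ, x' ≤ x → y' ≤ y → R (delta (x, y)) (delta (x', y'))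

/-- Converse Pareto. -/
def ConvPareto (R : Lottery (ℝ × ℝ) → Lottery (ℝ × ℝ) → Prop) : Prop :=
  ∀ x y x' y' : ℝ, R (delta (x, y)) (delta (x', y')) → x' ≤ x ∧ y' ≤ y

/-- Two outcomes are unidimensional with each other if they differ in at most one coordinate. -/
def UniWith {A B : Type*} (o o' : A × B) : Prop := o.1 = o'.1 ∨ o.2 = o'.2

/-- A lottery is unidimensional if any two outcomes in its support are unidimensional
with each other. -/
def Unidim {A B : Type*} (f : Lottery (A × B)) : Prop :=
  ∀ o ∈ f.val.support, ∀ o' ∈ f.val.support, UniWith o o'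

/-- Expectationalism. -/
def Expectationalism (R : Lottery (ℝ × ℝ) → Lottery (ℝ × ℝ) → Prop) : Prop :=
  ∀ f, Indiff R f (delta (expLot f))

/-- Unidimensional Expectations. -/
def UnidimExp (R : Lottery (ℝ × ℝ) → Lottery (ℝ × ℝ) → Prop) : Prop :=
  ∀ f, Unidim f → Indiff R f (delta (expLot f))

end Lottery

open Lottery

/-- Qualitative Pareto. -/
def QPareto {O₁ O₂ : Type*} (R1 : Lottery O₁ → Lottery O₁ → Prop)
    (R2 : Lottery O₂ → Lottery O₂ → Prop)
    (R : Lottery (O₁ × O₂) → Lottery (O₁ × O₂) → Prop) : Prop :=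
  ∀ o₁ o₁' : O₁, ∀ o₂ o₂' : O₂,
    R1 (delta o₁) (delta o₁') → R2 (delta o₂) (delta o₂') →
      R (delta (o₁, o₂)) (delta (o₁', o₂'))

/-- Qualitative Converse Pareto. -/
def QConvPareto {O₁ O₂ : Type*} (R1 : Lottery O₁ → Lottery O₁ → Prop)
    (R2 : Lottery O₂ → Lottery O₂ → Prop)
    (R : Lottery (O₁ × O₂) → Lottery (O₁ × O₂) → Prop) : Prop :=
  ∀ o₁ o₁' : O₁, ∀ o₂ o₂' : O₂,
    R (delta (o₁, o₂)) (delta (o₁', o₂')) →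
      R1 (delta o₁) (delta o₁') ∧ R2 (delta o₂) (delta o₂')

/-- The embedding `o₁ ↦ (o₁, o₂)`. -/
def fixSnd {O₁ O₂ : Type*} (o₂ : O₂) : O₁ ↪ O₁ × O₂ :=
  ⟨fun o₁ => (o₁, o₂), fun a b h => by simpa using congrArg Prod.fst h⟩

/-- The embedding `o₂ ↦ (o₁, o₂)`. -/
def fixFst {O₁ O₂ : Type*} (o₁ : O₁) : O₂ ↪ O₁ × O₂ :=
  ⟨fun o₂ => (o₁, o₂), fun a b h => by simpa using congrArg Prod.snd h⟩

/-- The lottery `(f₁, o₂)` on `O₁ × O₂` obtained from a lottery on `O₁`. -/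
noncomputable def embed1 {O₁ O₂ : Type*} (f : Lottery O₁) (o₂ : O₂) : Lottery (O₁ × O₂) where
  val := f.val.embDomain (fixSnd o₂)
  nonneg := fun x => by
    rcases em (x ∈ Set.range (fixSnd (O₁ := O₁) o₂)) with ⟨a, rfl⟩ | hx
    · rw [Finsupp.embDomain_apply_self]; exact f.nonneg a
    · rw [Finsupp.embDomain_notin_range _ _ _ hx]
  total := by
    rw [Finsupp.sum_embDomain]
    exact f.total

/-- The lottery `(f₂, o₁)` on `O₁ × O₂` obtained from a lottery on `O₂`. -/
noncomputable def embed2 {O₁ O₂ : Type*} (f : Lottery O₂) (o₁ : O₁) : Lottery (O₁ × O₂) where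
  val := f.val.embDomain (fixFst o₁)
  nonneg := fun x => by
    rcases em (x ∈ Set.range (fixFst (O₂ := O₂) o₁)) with ⟨a, rfl⟩ | hx
    · rw [Finsupp.embDomain_apply_self]; exact f.nonneg a
    · rw [Finsupp.embDomain_notin_range _ _ _ hx]
  total := by
    rw [Finsupp.sum_embDomain]
    exact f.total

/-- Unidimensional Dimensional Separability. -/
def UnidimDimSep {O₁ O₂ : Type*} (R1 : Lottery O₁ → Lottery O₁ → Prop)
    (R2 : Lottery O₂ → Lottery O₂ → Prop)
    (R : Lottery (O₁ × O₂) → Lottery (O₁ × O₂) → Prop) : Prop :=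
  (∀ f₁ g₁ : Lottery O₁, R1 f₁ g₁ ↔ ∀ o₂ : O₂, R (embed1 f₁ o₂) (embed1 g₁ o₂)) ∧
  (∀ f₂ g₂ : Lottery O₂, R2 f₂ g₂ ↔ ∀ o₁ : O₁, R (embed2 f₂ o₁) (embed2 g₂ o₁))


section Aux

variable {X : Type*} {R : Lottery X → Lottery X → Prop}

lemma lottery_ext {f g : Lottery X} (h : f.val = g.val) : f = g := by
  cases f; cases g; simp_all

lemma mix_val (α : ℝ) (h1 : 0 ≤ α) (h2 : α ≤ 1) (f g : Lottery X) :
    (mix α h1 h2 f g).val = α • f.val + (1 - α) • g.val := rfl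

lemma mix_comm' (α : ℝ) (h1 : 0 ≤ α) (h2 : α ≤ 1) (h1' : 0 ≤ 1 - α) (h2' : 1 - α ≤ 1)
    (f g : Lottery X) : mix α h1 h2 f g = mix (1 - α) h1' h2' g f := by
  apply lottery_ext; rw [mix_val, mix_val]; module

lemma mix_self' (h1 : (0:ℝ) ≤ 1/2) (h2 : (1:ℝ)/2 ≤ 1) (f : Lottery X) :
    mix (1/2) h1 h2 f f = f := by
  apply lottery_ext; rw [mix_val]; module

lemma indep_fst (hI : Independence R) {f g : Lottery X} (x : Lottery X)
    {α : ℝ} (h1 : 0 < α) (h2 : α < 1) (h : R f g) :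
    R (mix α h1.le h2.le f x) (mix α h1.le h2.le g x) :=
  (hI f g x α h1 h2).mp h

lemma indep_snd (hI : Independence R) {f g : Lottery X} (x : Lottery X)
    {α : ℝ} (h1 : 0 < α) (h2 : α < 1) (h : R f g) :
    R (mix α h1.le h2.le x f) (mix α h1.le h2.le x g) := by
  have h1' : (0:ℝ) < 1 - α := by linarith
  have h2' : 1 - α < 1 := by linarith
  rw [mix_comm' α h1.le h2.le h1'.le h2'.le x f, mix_comm' α h1.le h2.le h1'.le h2'.le x g]
  exact (hI f g x (1 - α) h1' h2').mp h

lemma mixMono (hI : Independence R) (ht : Transitive R) {f g f' g' : Lottery X}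
    {α : ℝ} (h1 : 0 < α) (h2 : α < 1) (h : R f g) (h' : R f' g') :
    R (mix α h1.le h2.le f f') (mix α h1.le h2.le g g') :=
  ht (indep_fst hI f' h1 h2 h) (indep_snd hI g h1 h2 h')

lemma mixStrict (hI : Independence R) {f g : Lottery X} (x : Lottery X)
    {α : ℝ} (h1 : 0 < α) (h2 : α < 1) (h : SPref R f g) :
    SPref R (mix α h1.le h2.le f x) (mix α h1.le h2.le g x) :=
  ⟨(hI f g x α h1 h2).mp h.1, fun hc => h.2 ((hI g f x α h1 h2).mpr hc)⟩

lemma sprefWeak (ht : Transitive R) {f g h : Lottery X} (h1 : SPref R f g) (h2 : R g h) :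
    SPref R f h :=
  ⟨ht h1.1 h2, fun hc => h1.2 (ht h2 hc)⟩

lemma sprefTrans (ht : Transitive R) {f g h : Lottery X} (h1 : SPref R f g)
    (h2 : SPref R g h) : SPref R f h := sprefWeak ht h1 h2.1

end Aux

section EmbAux

variable {O₁ O₂ : Type*}

lemma embed1_delta (x : O₁) (y : O₂) : embed1 (delta x) y = delta (x, y) := by
  apply lottery_ext
  show Finsupp.embDomain _ _ = _
  simp [delta, Finsupp.embDomain_single, fixSnd]
  rfl

lemma embed2_delta (y : O₂) (x : O₁) : embed2 (delta y) x = delta (x, y) := by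
  apply lottery_ext
  show Finsupp.embDomain _ _ = _
  simp [delta, Finsupp.embDomain_single, fixFst]
  rfl

lemma embed1_mix (α : ℝ) (h1 : 0 ≤ α) (h2 : α ≤ 1) (f g : Lottery O₁) (y : O₂) :
    embed1 (mix α h1 h2 f g) y = mix α h1 h2 (embed1 f y) (embed1 g y) := by
  apply lottery_ext
  show Finsupp.embDomain _ _ = _
  rw [Finsupp.embDomain_eq_mapDomain]
  show Finsupp.mapDomain _ (α • f.val + (1 - α) • g.val)
      = α • Finsupp.embDomain _ _ + (1 - α) • Finsupp.embDomain _ _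
  rw [Finsupp.mapDomain_add, Finsupp.mapDomain_smul, Finsupp.mapDomain_smul,
    Finsupp.embDomain_eq_mapDomain, Finsupp.embDomain_eq_mapDomain]

lemma embed2_mix (α : ℝ) (h1 : 0 ≤ α) (h2 : α ≤ 1) (f g : Lottery O₂) (x : O₁) :
    embed2 (mix α h1 h2 f g) x = mix α h1 h2 (embed2 f x) (embed2 g x) := by
  apply lottery_ext
  show Finsupp.embDomain _ _ = _
  rw [Finsupp.embDomain_eq_mapDomain]
  show Finsupp.mapDomain _ (α • f.val + (1 - α) • g.val)
      = α • Finsupp.embDomain _ _ + (1 - α) • Finsupp.embDomain _ _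
  rw [Finsupp.mapDomain_add, Finsupp.mapDomain_smul, Finsupp.mapDomain_smul,
    Finsupp.embDomain_eq_mapDomain, Finsupp.embDomain_eq_mapDomain]

lemma embed1_unif (x x' : O₁) (y : O₂) :
    embed1 (unif x x') y
      = mix (1/2) (by norm_num) (by norm_num) (delta (x, y)) (delta (x', y)) := by
  simp only [unif]
  rw [embed1_mix, embed1_delta, embed1_delta]

lemma embed2_unif (y y' : O₂) (x : O₁) :
    embed2 (unif y y') x
      = mix (1/2) (by norm_num) (by norm_num) (delta (x, y)) (delta (x, y')) := by
  simp only [unif]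
  rw [embed2_mix, embed2_delta, embed2_delta]

end EmbAux


/-- qualitative inconsistency of Pareto, Converse Pareto, Independence,

Unidimensional Dimensional Separability, and Negative Dominance, given four strictly
ordered elements in each dimension with `aᵢ/dᵢ ∼ᵢ δ_{bᵢ}` and `δ_{cᵢ} ≽ᵢ bᵢ/dᵢ`. -/
theorem statement16 {O₁ O₂ : Type*} [Nonempty O₁] [Nonempty O₂]
    (R1 : Lottery O₁ → Lottery O₁ → Prop) (R2 : Lottery O₂ → Lottery O₂ → Prop)
    (R : Lottery (O₁ × O₂) → Lottery (O₁ × O₂) → Prop)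
    (h1r : Reflexive R1) (h1t : Transitive R1)
    (h2r : Reflexive R2) (h2t : Transitive R2)
    (hr : Reflexive R) (ht : Transitive R)
    (hex1 : ∃ a b c d : O₁, SPref R1 (delta a) (delta b) ∧ SPref R1 (delta b) (delta c) ∧
      SPref R1 (delta c) (delta d) ∧ Indiff R1 (unif a d) (delta b) ∧
      R1 (delta c) (unif b d))
    (hex2 : ∃ a b c d : O₂, SPref R2 (delta a) (delta b) ∧ SPref R2 (delta b) (delta c) ∧
      SPref R2 (delta c) (delta d) ∧ Indiff R2 (unif a d) (delta b) ∧
      R2 (delta c) (unif b d)) :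
    ¬ (QPareto R1 R2 R ∧ QConvPareto R1 R2 R ∧ Independence R ∧
        UnidimDimSep R1 R2 R ∧ NegDominance R) := by
  rintro ⟨hQP, hQCP, hI, hUDS, hND⟩
  obtain ⟨a₁, b₁, c₁, d₁, hab1, hbc1, hcd1, hind1, hc1⟩ := hex1
  obtain ⟨a₂, b₂, c₂, d₂, hab2, hbc2, hcd2, hind2, hc2⟩ := hex2
  have hh1 : (0:ℝ) < 1/2 := by norm_num
  have hh2 : (1:ℝ)/2 < 1 := by norm_num
  have hq1 : (0:ℝ) < 1/4 := by norm_num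
  have hq2 : (1:ℝ)/4 < 1 := by norm_num
  have h31 : (0:ℝ) < 1/3 := by norm_num
  have h32 : (1:ℝ)/3 < 1 := by norm_num
  -- strict a₁ ≻ d₁, weak a₂ ≽ d₂
  have s1ad : SPref R1 (delta a₁) (delta d₁) :=
    sprefTrans h1t hab1 (sprefTrans h1t hbc1 hcd1)
  have w2ad : R2 (delta a₂) (delta d₂) := h2t hab2.1 (h2t hbc2.1 hcd2.1)
  -- strict Pareto: (a₁,d₂) ≻ (d₁,d₂)
  have spAD : SPref R (delta (a₁, d₂)) (delta (d₁, d₂)) :=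
    ⟨hQP a₁ d₁ d₂ d₂ s1ad.1 (h2r _), fun hc => s1ad.2 (hQCP d₁ a₁ d₂ d₂ hc).1⟩
  -- s = ½(a₁,d₂)+½(d₁,a₂) ≻ (d₁,d₂)
  have sStrict : SPref R
      (mix (1/2) hh1.le hh2.le (delta (a₁, d₂)) (delta (d₁, a₂))) (delta (d₁, d₂)) := by
    have step1 := mixStrict hI (delta (d₁, a₂)) hh1 hh2 spAD
    have step2 : R (mix (1/2) hh1.le hh2.le (delta (d₁, d₂)) (delta (d₁, a₂)))
        (mix (1/2) hh1.le hh2.le (delta (d₁, d₂)) (delta (d₁, d₂))) :=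
      indep_snd hI (delta (d₁, d₂)) hh1 hh2 (hQP d₁ d₁ a₂ d₂ (h1r _) w2ad)
    rw [mix_self'] at step2
    exact sprefWeak ht step1 step2
  -- abbreviations as plain terms
  -- C = ⅓(a₁,a₂)+⅓(a₁,d₂)+⅓(d₁,a₂)
  -- m' = ¼ s + ¾ C ; h' = ¼ (d₁,d₂) + ¾ C
  have strictMH : SPref R
      (mix (1/4) hq1.le hq2.le
        (mix (1/2) hh1.le hh2.le (delta (a₁, d₂)) (delta (d₁, a₂)))
        (mix (1/3) h31.le h32.le (delta (a₁, a₂))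
          (mix (1/2) hh1.le hh2.le (delta (a₁, d₂)) (delta (d₁, a₂)))))
      (mix (1/4) hq1.le hq2.le (delta (d₁, d₂))
        (mix (1/3) h31.le h32.le (delta (a₁, a₂))
          (mix (1/2) hh1.le hh2.le (delta (a₁, d₂)) (delta (d₁, a₂))))) :=
    mixStrict hI _ hq1 hq2 sStrict
  -- f ≽ m
  have hA : R (delta (a₁, c₂))
      (mix (1/2) hh1.le hh2.le (delta (a₁, b₂)) (delta (a₁, d₂))) := by
    have h0 := ((hUDS.2 (delta c₂) (unif b₂ d₂)).mp hc2) a₁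
    rwa [embed2_delta, embed2_unif] at h0
  have hB : R (delta (c₁, a₂))
      (mix (1/2) hh1.le hh2.le (delta (b₁, a₂)) (delta (d₁, a₂))) := by
    have h0 := ((hUDS.1 (delta c₁) (unif b₁ d₁)).mp hc1) a₂
    rwa [embed1_delta, embed1_unif] at h0
  have hfm : R (mix (1/2) hh1.le hh2.le (delta (a₁, c₂)) (delta (c₁, a₂)))
      (mix (1/2) hh1.le hh2.le
        (mix (1/2) hh1.le hh2.le (delta (a₁, b₂)) (delta (a₁, d₂)))
        (mix (1/2) hh1.le hh2.le (delta (b₁, a₂)) (delta (d₁, a₂)))) :=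
    mixMono hI ht hh1 hh2 hA hB
  -- m ≽ m'' (replace b's by a/d mixtures downward)
  have hPb2 : R (delta (a₁, b₂))
      (mix (1/2) hh1.le hh2.le (delta (a₁, a₂)) (delta (a₁, d₂))) := by
    have h0 := ((hUDS.2 (delta b₂) (unif a₂ d₂)).mp hind2.2) a₁
    rwa [embed2_delta, embed2_unif] at h0
  have hPb1 : R (delta (b₁, a₂))
      (mix (1/2) hh1.le hh2.le (delta (a₁, a₂)) (delta (d₁, a₂))) := by
    have h0 := ((hUDS.1 (delta b₁) (unif a₁ d₁)).mp hind1.2) a₂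
    rwa [embed1_delta, embed1_unif] at h0
  have hmm'' : R (mix (1/2) hh1.le hh2.le
        (mix (1/2) hh1.le hh2.le (delta (a₁, b₂)) (delta (a₁, d₂)))
        (mix (1/2) hh1.le hh2.le (delta (b₁, a₂)) (delta (d₁, a₂))))
      (mix (1/2) hh1.le hh2.le
        (mix (1/2) hh1.le hh2.le
          (mix (1/2) hh1.le hh2.le (delta (a₁, a₂)) (delta (a₁, d₂))) (delta (a₁, d₂)))
        (mix (1/2) hh1.le hh2.le
          (mix (1/2) hh1.le hh2.le (delta (a₁, a₂)) (delta (d₁, a₂))) (delta (d₁, a₂)))) :=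
    mixMono hI ht hh1 hh2 (mixMono hI ht hh1 hh2 hPb2 (hr _))
      (mixMono hI ht hh1 hh2 hPb1 (hr _))
  -- m'' = m'
  have em : (mix (1/2) hh1.le hh2.le
        (mix (1/2) hh1.le hh2.le
          (mix (1/2) hh1.le hh2.le (delta (a₁, a₂)) (delta (a₁, d₂))) (delta (a₁, d₂)))
        (mix (1/2) hh1.le hh2.le
          (mix (1/2) hh1.le hh2.le (delta (a₁, a₂)) (delta (d₁, a₂))) (delta (d₁, a₂))))
      = mix (1/4) hq1.le hq2.le
        (mix (1/2) hh1.le hh2.le (delta (a₁, d₂)) (delta (d₁, a₂)))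
        (mix (1/3) h31.le h32.le (delta (a₁, a₂))
          (mix (1/2) hh1.le hh2.le (delta (a₁, d₂)) (delta (d₁, a₂)))) := by
    apply lottery_ext
    simp only [mix_val]
    module
  -- h' = ¼dd + ¾C equals product lottery
  have eh : (mix (1/4) hq1.le hq2.le (delta (d₁, d₂))
        (mix (1/3) h31.le h32.le (delta (a₁, a₂))
          (mix (1/2) hh1.le hh2.le (delta (a₁, d₂)) (delta (d₁, a₂)))))
      = mix (1/2) hh1.le hh2.le
        (mix (1/2) hh1.le hh2.le (delta (a₁, a₂)) (delta (a₁, d₂)))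
        (mix (1/2) hh1.le hh2.le (delta (d₁, a₂)) (delta (d₁, d₂))) := by
    apply lottery_ext
    simp only [mix_val]
    module
  -- h' ≽ (b₁,b₂)
  have hQa : R (mix (1/2) hh1.le hh2.le (delta (a₁, a₂)) (delta (a₁, d₂)))
      (delta (a₁, b₂)) := by
    have h0 := ((hUDS.2 (unif a₂ d₂) (delta b₂)).mp hind2.1) a₁
    rwa [embed2_delta, embed2_unif] at h0
  have hQd : R (mix (1/2) hh1.le hh2.le (delta (d₁, a₂)) (delta (d₁, d₂)))
      (delta (d₁, b₂)) := by
    have h0 := ((hUDS.2 (unif a₂ d₂) (delta b₂)).mp hind2.1) d₁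
    rwa [embed2_delta, embed2_unif] at h0
  have hQ1 : R (mix (1/2) hh1.le hh2.le (delta (a₁, b₂)) (delta (d₁, b₂)))
      (delta (b₁, b₂)) := by
    have h0 := ((hUDS.1 (unif a₁ d₁) (delta b₁)).mp hind1.1) b₂
    rwa [embed1_delta, embed1_unif] at h0
  have hh' : R (mix (1/4) hq1.le hq2.le (delta (d₁, d₂))
        (mix (1/3) h31.le h32.le (delta (a₁, a₂))
          (mix (1/2) hh1.le hh2.le (delta (a₁, d₂)) (delta (d₁, a₂)))))
      (delta (b₁, b₂)) := by
    rw [eh]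
    exact ht (mixMono hI ht hh1 hh2 hQa hQd) hQ1
  -- assemble strict preference f ≻ (b₁,b₂)
  rw [em] at hmm''
  have w1 : R (mix (1/2) hh1.le hh2.le (delta (a₁, c₂)) (delta (c₁, a₂)))
      (mix (1/4) hq1.le hq2.le
        (mix (1/2) hh1.le hh2.le (delta (a₁, d₂)) (delta (d₁, a₂)))
        (mix (1/3) h31.le h32.le (delta (a₁, a₂))
          (mix (1/2) hh1.le hh2.le (delta (a₁, d₂)) (delta (d₁, a₂))))) := ht hfm hmm''
  have hstrict : SPref R (mix (1/2) hh1.le hh2.le (delta (a₁, c₂)) (delta (c₁, a₂)))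
      (delta (b₁, b₂)) :=
    ⟨ht w1 (ht strictMH.1 hh'), fun hc => strictMH.2 (ht hh' (ht hc w1))⟩
  -- negative dominance yields a contradiction
  obtain ⟨o, ho, o', ho', hoo'⟩ := hND _ _ hstrict
  have ho'eq : o' = (b₁, b₂) := by
    have h0 := Finsupp.mem_support_iff.mp ho'
    by_contra hne
    exact h0 (Finsupp.single_eq_of_ne' (Ne.symm hne))
  subst ho'eq
  have hoeq : o = (a₁, c₂) ∨ o = (c₁, a₂) := by
    have h0 := Finsupp.mem_support_iff.mp ho
    by_contra hc
    push_neg at hc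
    apply h0
    show (1/2 : ℝ) • (delta (a₁, c₂)).val o + (1 - 1/2 : ℝ) • (delta (c₁, a₂)).val o = 0
    show (1/2 : ℝ) • (Finsupp.single (a₁, c₂) 1) o
        + (1 - 1/2 : ℝ) • (Finsupp.single (c₁, a₂) 1) o = 0
    rw [Finsupp.single_eq_of_ne' (Ne.symm hc.1), Finsupp.single_eq_of_ne' (Ne.symm hc.2)]
    norm_num
  rcases hoeq with rfl | rfl
  · exact hbc2.2 (hQCP a₁ b₁ c₂ b₂ hoo'.1).2
  · exact hbc1.2 (hQCP c₁ b₁ a₂ b₂ hoo'.1).1
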